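/- arXiv:math-ph/0311052 — 5 statements merged into one kernel-verified Lean document; each statement's English description precedes it below -/
import Mathlib

section
/- Let z ∈ ℂ³ with z² = −1, and suppose the imaginary part y = Im z satisfies y² > 0 and y₀ > 0 (i.e. z lies in the Lorentz tuboid 𝒯⁺), and let z' ∈ ℂ³ with z'² = −1, Im z' ∈ V⁻ (i.e. z' ∈ 𝒯⁻). Then [z·z'] is not a real number ≤ −1; equivalently (z − z')² ∉ [0, ∞). -/
open Complex

/-- Sum of two future timelike vectors is timelike. -/
lemma aux_cone (y0 y1 y2 u0 u1 u2 : ℝ) (hy : y0^2 - y1^2 - y2^2 > 0) (hy0 : y0 > 0)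
    (hu : u0^2 - u1^2 - u2^2 > 0) (hu0 : u0 > 0) :
    (y0+u0)^2 - (y1+u1)^2 - (y2+u2)^2 > 0 := by
  nlinarith [sq_nonneg (y1*u2 - y2*u1), mul_pos hy0 hu0, mul_pos hy hu,
    sq_nonneg (y0*u0 - y1*u1 - y2*u2), sq_nonneg (y1*u1 + y2*u2)]

/-- A vector Minkowski-orthogonal to a timelike vector is spacelike or zero. -/
lemma aux_orth (a0 a1 a2 b0 b1 b2 : ℝ) (hb : b0^2 - b1^2 - b2^2 > 0)
    (ho : a0*b0 - a1*b1 - a2*b2 = 0) : a0^2 - a1^2 - a2^2 ≤ 0 := by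
  by_contra h
  push_neg at h
  have hb0 : b0^2 > 0 := by nlinarith [sq_nonneg b1, sq_nonneg b2]
  have e : a0*b0 = a1*b1 + a2*b2 := by linarith
  have e2 : (a0*b0)^2 = (a1*b1 + a2*b2)^2 := by rw [e]
  nlinarith [mul_pos h hb0, sq_nonneg (a1*b2 - a2*b1),
    mul_nonneg (add_nonneg (sq_nonneg a1) (sq_nonneg a2)) hb.le, e2]

/-- For `z ∈ 𝒯⁺` and `z' ∈ 𝒯⁻` on the complex hyperboloid, `[z·z']` is never a
real number `≤ −1`. -/
theorem stmt_3 (z0 z1 z2 w0 w1 w2 : ℂ)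
    (hz : z0 ^ 2 - z1 ^ 2 - z2 ^ 2 = -1)
    (hw : w0 ^ 2 - w1 ^ 2 - w2 ^ 2 = -1)
    (hzV : z0.im ^ 2 - z1.im ^ 2 - z2.im ^ 2 > 0 ∧ z0.im > 0)
    (hwV : w0.im ^ 2 - w1.im ^ 2 - w2.im ^ 2 > 0 ∧ w0.im < 0) :
    ¬∃ r : ℝ, r ≤ -1 ∧ z0 * w0 - z1 * w1 - z2 * w2 = (r : ℂ) := by
  rintro ⟨r, hr, hzw⟩
  obtain ⟨hy2, hy0⟩ := hzV
  obtain ⟨hu2, hu0⟩ := hwV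
  rw [Complex.ext_iff] at hz hw hzw
  simp only [pow_two, Complex.sub_re, Complex.sub_im, Complex.mul_re, Complex.mul_im,
    Complex.neg_re, Complex.neg_im, Complex.one_re, Complex.one_im,
    Complex.ofReal_re, Complex.ofReal_im] at hz hw hzw
  obtain ⟨hzre, hzim⟩ := hz
  obtain ⟨hwre, hwim⟩ := hw
  obtain ⟨hre, him⟩ := hzw
  -- b = Im z - Im w is future timelike
  have hb : (z0.im - w0.im)^2 - (z1.im - w1.im)^2 - (z2.im - w2.im)^2 > 0 := by
    have := aux_cone z0.im z1.im z2.im (-w0.im) (-w1.im) (-w2.im)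
      (by nlinarith) hy0 (by nlinarith) (by linarith)
    nlinarith [this]
  -- a = Re z - Re w is orthogonal to b
  have ho : (z0.re - w0.re)*(z0.im - w0.im) - (z1.re - w1.re)*(z1.im - w1.im)
      - (z2.re - w2.re)*(z2.im - w2.im) = 0 := by
    linear_combination (1/2)*hzim + (1/2)*hwim - him
  have ha := aux_orth _ _ _ _ _ _ hb ho
  -- a² - b² = -2 - 2r ≥ 0
  have hab : (z0.re - w0.re)^2 - (z1.re - w1.re)^2 - (z2.re - w2.re)^2
      - ((z0.im - w0.im)^2 - (z1.im - w1.im)^2 - (z2.im - w2.im)^2) = -2 - 2*r := by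
    linear_combination hzre + hwre - 2*hre
  linarith
end

section
/- Let Z = X + iY ∈ ℂ³ with Y² > 0 (Minkowski form, signature (+,−,−)). Then Z² ∉ [0, ∞); in particular Z² (which equals X² − Y² + 2i[X·Y]) cannot be a nonnegative real number. -/
open Complex

/-- If `Z = X + iY ∈ ℂ³` with `Y² > 0` (Minkowski), then `Z² ∉ [0,∞)`. -/
theorem stmt_4 (Z0 Z1 Z2 : ℂ)
    (hY : Z0.im ^ 2 - Z1.im ^ 2 - Z2.im ^ 2 > 0) :
    ¬∃ r : ℝ, 0 ≤ r ∧ Z0 ^ 2 - Z1 ^ 2 - Z2 ^ 2 = (r : ℂ) := by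
  rintro ⟨r, hr, heq⟩
  rw [Complex.ext_iff] at heq
  obtain ⟨h1, h2⟩ := heq
  simp [pow_two, Complex.mul_re, Complex.mul_im] at h1 h2
  have h3 : Z0.re * Z0.im = Z1.re * Z1.im + Z2.re * Z2.im := by linarith
  have hy0 : 0 < Z0.im ^ 2 := by nlinarith [sq_nonneg Z1.im, sq_nonneg Z2.im]
  have h4 : Z0.re ^ 2 * Z0.im ^ 2 = (Z1.re * Z1.im + Z2.re * Z2.im) ^ 2 := by
    rw [← h3]; ring
  have key : Z0.re ^ 2 * Z0.im ^ 2 ≤ (Z1.re ^ 2 + Z2.re ^ 2) * Z0.im ^ 2 := by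
    nlinarith [h4, sq_nonneg (Z1.re * Z2.im - Z2.re * Z1.im),
      mul_nonneg (by positivity : (0:ℝ) ≤ Z1.re ^ 2 + Z2.re ^ 2)
        (by linarith : (0:ℝ) ≤ Z0.im ^ 2 - Z1.im ^ 2 - Z2.im ^ 2)]
  have hx : Z0.re ^ 2 ≤ Z1.re ^ 2 + Z2.re ^ 2 :=
    le_of_mul_le_mul_right (by linarith) hy0
  nlinarith [hY, hr, h1, hx]
end

section
/- Let λ, μ ∈ ℂ with Im λ < 0 and Im μ > 0, and let z = z(λ,μ) be given by z₀ = (1+λμ)/(λ−μ), z₁ = (1−λμ)/(λ−μ), z₂ = (λ+μ)/(λ−μ). Then for every real α with |α| < π, Im([z·ξ(α)]) > 0, where ξ(α) = (1, cos α, sin α). -/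
lemma key_im_pos (A B : ℂ) (hA : A.im < 0) (hB : B.im > 0) :
    (A * B / (A - B)).im > 0 := by
  have hns : 0 < Complex.normSq (A - B) := by
    rw [Complex.normSq_pos]
    intro h
    have : (A - B).im = 0 := by rw [h]; simp
    rw [Complex.sub_im] at this
    linarith
  rw [Complex.div_im, Complex.mul_im, Complex.mul_re, Complex.sub_re, Complex.sub_im]
  rw [div_sub_div_same, gt_iff_lt, lt_div_iff₀ hns]
  have h1 : 0 < B.im * (A.re ^ 2 + A.im ^ 2) := by
    apply mul_pos hB
    nlinarith [sq_nonneg A.re, sq_nonneg A.im]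
  have h2 : 0 < -A.im * (B.re ^ 2 + B.im ^ 2) := by
    apply mul_pos (by linarith)
    nlinarith [sq_nonneg B.re, sq_nonneg B.im]
  nlinarith [h1, h2]

/-- For `(λ,μ)` in the tube `τ^{−,+}` and `|α| < π`, `Im([z(λ,μ)·ξ(α)]) > 0`. -/
theorem stmt_9 (l m : ℂ) (hl : l.im < 0) (hm : m.im > 0) (α : ℝ) (hα : |α| < Real.pi) :
    ((1 + l * m) / (l - m) - ((1 - l * m) / (l - m)) * (Real.cos α : ℂ)
        - ((l + m) / (l - m)) * (Real.sin α : ℂ)).im > 0 := by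
  set c := Real.cos (α / 2) with hc_def
  set s := Real.sin (α / 2) with hs_def
  have hc : 0 < c := by
    apply Real.cos_pos_of_mem_Ioo
    constructor
    · linarith [(abs_lt.mp hα).1]
    · linarith [(abs_lt.mp hα).2]
  have hcne : (c : ℂ) ≠ 0 := by exact_mod_cast hc.ne'
  have hpy : (s : ℂ) ^ 2 + (c : ℂ) ^ 2 = 1 := by
    exact_mod_cast congrArg (fun x : ℝ => (x : ℂ)) (Real.sin_sq_add_cos_sq (α / 2))
  have hcos : (Real.cos α : ℂ) = (c : ℂ) ^ 2 - (s : ℂ) ^ 2 := by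
    have : Real.cos α = c ^ 2 - s ^ 2 := by
      rw [hc_def, hs_def, show α = 2 * (α / 2) by ring, Real.cos_two_mul']
      ring_nf
    exact_mod_cast congrArg (fun x : ℝ => (x : ℂ)) this
  have hsin : (Real.sin α : ℂ) = 2 * (s : ℂ) * (c : ℂ) := by
    have : Real.sin α = 2 * s * c := by
      rw [hc_def, hs_def, show α = 2 * (α / 2) by ring, Real.sin_two_mul]
      ring_nf
    exact_mod_cast congrArg (fun x : ℝ => (x : ℂ)) this
  have hlm : (l - m : ℂ) ≠ 0 := by
    intro h
    have : (l - m).im = 0 := by rw [h]; simp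
    rw [Complex.sub_im] at this
    linarith
  set A : ℂ := l - (s / c : ℝ) with hA_def
  set B : ℂ := m - (s / c : ℝ) with hB_def
  have hAB : A - B = l - m := by rw [hA_def, hB_def]; ring
  have hnum : (1 + l * m) - (1 - l * m) * ((c : ℂ) ^ 2 - (s : ℂ) ^ 2)
      - (l + m) * (2 * (s : ℂ) * (c : ℂ)) = ((2 * c ^ 2 : ℝ) : ℂ) * (A * B) := by
    rw [hA_def, hB_def]
    push_cast
    field_simp
    ring_nf
    linear_combination (-(1 + l * m)) * hpy
  have heq : (1 + l * m) / (l - m) - ((1 - l * m) / (l - m)) * (Real.cos α : ℂ)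
        - ((l + m) / (l - m)) * (Real.sin α : ℂ)
      = ((2 * c ^ 2 : ℝ) : ℂ) * (A * B / (A - B)) := by
    rw [hcos, hsin, hAB, div_mul_eq_mul_div, div_mul_eq_mul_div, div_sub_div_same,
      div_sub_div_same, hnum, mul_div_assoc]
  rw [heq]
  have hA_im : A.im < 0 := by
    rw [hA_def, Complex.sub_im, Complex.ofReal_im]
    linarith
  have hB_im : B.im > 0 := by
    rw [hB_def, Complex.sub_im, Complex.ofReal_im]
    linarith
  have hkey := key_im_pos A B hA_im hB_im
  have him : (((2 * c ^ 2 : ℝ) : ℂ) * (A * B / (A - B))).im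
      = (2 * c ^ 2) * (A * B / (A - B)).im := by
    rw [Complex.mul_im, Complex.ofReal_re, Complex.ofReal_im]
    ring
  rw [him]
  exact mul_pos (by positivity) hkey
end

section
/- Let λ, μ ∈ ℂ with Im λ > 0 and Im μ > 0, λ ≠ μ, and let z = z(λ,μ) be given by z₀ = (1+λμ)/(λ−μ), z₁ = (1−λμ)/(λ−μ), z₂ = (λ+μ)/(λ−μ). Then ε(z) := (i/2)(z₁ z̄₂ − z₂ z̄₁) = (Im λ (1 + |μ|²) + Im μ (1 + |λ|²)) / |λ − μ|², and in particular ε(z) > 0. -/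
open Complex
/-- In the tube `τ^{+,+}`, the chirality function
`ε(z) = (i/2)(z₁ z̄₂ − z₂ z̄₁)` equals
`(Im λ (1+|μ|²) + Im μ (1+|λ|²))/|λ−μ|²`, which is positive. -/
theorem stmt_11 (l m : ℂ) (hl : 0 < l.im) (hm : 0 < m.im) (hlm : l ≠ m) :
    (I / 2) * (((1 - l * m) / (l - m)) * (starRingEnd ℂ) ((l + m) / (l - m))
        - ((l + m) / (l - m)) * (starRingEnd ℂ) ((1 - l * m) / (l - m)))
      = (((l.im * (1 + ‖m‖ ^ 2) + m.im * (1 + ‖l‖ ^ 2)) /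
          ‖l - m‖ ^ 2 : ℝ) : ℂ) ∧
    0 < (l.im * (1 + ‖m‖ ^ 2) + m.im * (1 + ‖l‖ ^ 2)) /
          ‖l - m‖ ^ 2 := by
  have hd : l - m ≠ 0 := sub_ne_zero.mpr hlm
  have habs : (0:ℝ) < ‖l - m‖ ^ 2 := pow_pos (norm_pos_iff.mpr hd) 2
  constructor
  · have key : (I / 2) * ((1 - l * m) * (starRingEnd ℂ) (l + m)
        - (l + m) * (starRingEnd ℂ) (1 - l * m))
        = (((l.im * (1 + ‖m‖ ^ 2) + m.im * (1 + ‖l‖ ^ 2)) : ℝ) : ℂ) := by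
      rw [Complex.sq_norm, Complex.sq_norm]
      apply Complex.ext <;>
      · simp [Complex.normSq_apply, Complex.ext_iff, Complex.mul_re, Complex.mul_im,
          Complex.add_re, Complex.add_im, Complex.sub_re, Complex.sub_im]
        ring
    calc (I / 2) * (((1 - l * m) / (l - m)) * (starRingEnd ℂ) ((l + m) / (l - m))
        - ((l + m) / (l - m)) * (starRingEnd ℂ) ((1 - l * m) / (l - m)))
        = ((I / 2) * ((1 - l * m) * (starRingEnd ℂ) (l + m)
            - (l + m) * (starRingEnd ℂ) (1 - l * m))) / ((l - m) * (starRingEnd ℂ) (l - m)) := by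
          rw [map_div₀, map_div₀, div_mul_div_comm, div_mul_div_comm, ← sub_div,
            mul_div_assoc]
      _ = _ := by
          rw [key, Complex.mul_conj, ← Complex.sq_norm]
          norm_cast
  · apply div_pos _ habs
    positivity
end

section
/- Let z' = x' + iy' ∈ ℂ³ with z'² = −1 be in the closure of the chiral tuboid 𝒯_← (parametrized as z' = (sinh Ψ, cosh Ψ sin Θ, cosh Ψ cos Θ) with Ψ = ψ + iφ, Θ = u + iv', tanh v' ≤ −|sin φ|/cosh ψ), and let v > 0, ξ = ξ(φ₀ + iv) = (1, sin(φ₀ + iv), cos(φ₀ + iv)) with φ₀ ∈ [−π/2, π/2]. Then [z'·ξ] ≠ 0. Equivalently: the point W = sinh(ψ + iφ) − cosh(ψ + iφ) cos(u − φ₀ + i(v' − v)) is nonzero, because W lies on an ellipse with foci e^{ψ+iφ} and e^{−(ψ+iφ)} and major axis 2cosh(v − v')|cosh(ψ + iφ)|, and the inequality cosh(v − v') > cosh ψ/√(cosh² ψ − sin² φ) (which follows from tanh(v' − v) < −|sin φ|/cosh ψ) ensures the origin is strictly inside this ellipse, hence |e^{ψ+iφ}| + |e^{−(ψ+iφ)}|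 < 2cosh(v − v')|cosh(ψ+iφ)| and W ≠ 0. -/
open Complex

private lemma sq_eq_helper {a b : ℝ} (ha : 0 ≤ a) (hb : 0 ≤ b) (h : a ^ 2 = b ^ 2) : a = b := by
  have h2 : (a - b) * (a + b) = 0 := by linear_combination h
  rcases mul_eq_zero.1 h2 with h3 | h3 <;> nlinarith

/-- Non-vanishing of `[z'·ξ]` for `z'` in the closure of the chiral tuboid `𝒯_←` and
`ξ` on the cycle `γ(z_v)` in `C_→` (`v > 0`): writing `Ψ = ψ + iφ`, the point
`sinh Ψ − cosh Ψ · cos((u − φ₀) + i(v' − v))` is nonzero whenever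
`tanh v' ≤ −|sin φ|/cosh ψ`, `v > 0` and `φ₀ ∈ [−π/2, π/2]`. -/
theorem stmt_19 (ψ φ u v' v φ₀ : ℝ) (hv : 0 < v)
    (hz' : Real.tanh v' ≤ -|Real.sin φ| / Real.cosh ψ)
    (hφ₀ : φ₀ ∈ Set.Icc (-(Real.pi / 2)) (Real.pi / 2)) :
    Complex.sinh ((ψ : ℂ) + I * φ) -
        Complex.cosh ((ψ : ℂ) + I * φ) *
          Complex.cos (((u - φ₀ : ℝ) : ℂ) + I * ((v' - v : ℝ) : ℂ)) ≠ 0 := by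
  intro h
  have hK0 : (0:ℝ) < Real.cosh ψ := Real.cosh_pos ψ
  have hS0 : (0:ℝ) ≤ |Real.sin φ| := abs_nonneg _
  have hsle : Real.sin φ ≤ |Real.sin φ| := le_abs_self _
  have hsge : -|Real.sin φ| ≤ Real.sin φ := neg_abs_le _
  have hcv' : (0:ℝ) < Real.cosh v' := Real.cosh_pos v'
  have htanh : Real.sinh v' * Real.cosh ψ ≤ -|Real.sin φ| * Real.cosh v' := by
    rw [Real.tanh_eq_sinh_div_cosh, div_le_div_iff₀ hcv' hK0] at hz'
    linarith
  have hcs : Real.cosh v' + Real.sinh v' = Real.exp v' := Real.cosh_add_sinh v'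
  have hexp : (0:ℝ) < Real.exp v' := Real.exp_pos v'
  have hSK : |Real.sin φ| < Real.cosh ψ := by
    nlinarith [mul_pos hcv' hK0]
  -- key inequality
  have hsinhv : 0 < Real.sinh v := Real.sinh_pos_iff.2 hv
  have hcb : (0:ℝ) < Real.cosh (v' - v) := Real.cosh_pos _
  have hmono : Real.sinh (v' - v) * Real.cosh v' - Real.cosh (v' - v) * Real.sinh v'
      = -Real.sinh v := by
    have := Real.sinh_sub (v' - v) v'
    simp only [show v' - v - v' = -v by ring, Real.sinh_neg] at this
    linarith
  have hkey : Real.cosh ψ * Real.sinh (v' - v) < -|Real.sin φ| * Real.cosh (v' - v) := by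
    nlinarith [mul_pos hK0 hsinhv, mul_pos hcb hK0]
  -- cartesian forms
  have hSi : Complex.sinh ((ψ : ℂ) + I * φ)
      = ((Real.sinh ψ * Real.cos φ : ℝ) : ℂ) + ((Real.cosh ψ * Real.sin φ : ℝ) : ℂ) * I := by
    rw [show (ψ:ℂ) + I * φ = (ψ:ℂ) + (φ:ℂ) * I by ring, Complex.sinh_add,
      Complex.sinh_mul_I, Complex.cosh_mul_I]
    push_cast
    ring
  have hCi : Complex.cosh ((ψ : ℂ) + I * φ)
      = ((Real.cosh ψ * Real.cos φ : ℝ) : ℂ) + ((Real.sinh ψ * Real.sin φ : ℝ) : ℂ) * I := by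
    rw [show (ψ:ℂ) + I * φ = (ψ:ℂ) + (φ:ℂ) * I by ring, Complex.cosh_add,
      Complex.sinh_mul_I, Complex.cosh_mul_I]
    push_cast
    ring
  have hA2 : Real.cosh ψ ^ 2 = Real.sinh ψ ^ 2 + 1 := Real.cosh_sq ψ
  have hB2 : Real.sin φ ^ 2 + Real.cos φ ^ 2 = 1 := Real.sin_sq_add_cos_sq φ
  have hA0 : 0 ≤ ‖Complex.cosh ((ψ : ℂ) + I * φ)‖ := norm_nonneg _
  -- abs of sinh Ψ ± I
  have habsP : ‖Complex.sinh ((ψ : ℂ) + I * φ) + I‖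
      = Real.cosh ψ + Real.sin φ := by
    apply sq_eq_helper (norm_nonneg _) (by linarith)
    rw [hSi, show ((Real.sinh ψ * Real.cos φ : ℝ) : ℂ)
          + ((Real.cosh ψ * Real.sin φ : ℝ) : ℂ) * I + I
        = ((Real.sinh ψ * Real.cos φ : ℝ) : ℂ)
          + ((Real.cosh ψ * Real.sin φ + 1 : ℝ) : ℂ) * I by push_cast; ring,
      Complex.sq_norm, Complex.normSq_add_mul_I]
    linear_combination (-(Real.cos φ ^ 2)) * hA2 + (Real.cosh ψ ^ 2 - 1) * hB2
  have habsM : ‖Complex.sinh ((ψ : ℂ) + I * φ) - I‖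
      = Real.cosh ψ - Real.sin φ := by
    apply sq_eq_helper (norm_nonneg _) (by linarith)
    rw [hSi, show ((Real.sinh ψ * Real.cos φ : ℝ) : ℂ)
          + ((Real.cosh ψ * Real.sin φ : ℝ) : ℂ) * I - I
        = ((Real.sinh ψ * Real.cos φ : ℝ) : ℂ)
          + ((Real.cosh ψ * Real.sin φ - 1 : ℝ) : ℂ) * I by push_cast; ring,
      Complex.sq_norm, Complex.normSq_add_mul_I]
    linear_combination (-(Real.cos φ ^ 2)) * hA2 + (Real.cosh ψ ^ 2 - 1) * hB2
  -- exponential factorization of the cosine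
  set Θ : ℂ := ((u - φ₀ : ℝ) : ℂ) + I * ((v' - v : ℝ) : ℂ) with hΘ
  set E1 := Complex.exp (Θ * I) with hE1
  set E2 := Complex.exp (-Θ * I) with hE2
  have hEE : E1 * E2 = 1 := by
    rw [hE1, hE2, ← Complex.exp_add, show Θ * I + -Θ * I = 0 by ring, Complex.exp_zero]
  have hcos : Complex.cos Θ = (E1 + E2) / 2 := rfl
  have habsE1 : ‖E1‖ = Real.exp (v - v') := by
    rw [hE1, Complex.norm_exp]
    congr 1
    simp [hΘ, Complex.mul_re, Complex.add_re, Complex.add_im, Complex.mul_im]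
  have habsE2 : ‖E2‖ = Real.exp (v' - v) := by
    rw [hE2, Complex.norm_exp]
    congr 1
    simp [hΘ, Complex.mul_re, Complex.add_re, Complex.add_im, Complex.mul_im]
  -- the two points
  set Ψc := Complex.cosh ((ψ : ℂ) + I * φ) with hΨc
  set Ψs := Complex.sinh ((ψ : ℂ) + I * φ) with hΨs
  rw [hcos] at h
  have hsum : Ψc * E1 + Ψc * E2 = 2 * Ψs := by linear_combination -2 * h
  have hprod : (Ψc * E1) * (Ψc * E2) = Ψc ^ 2 := by linear_combination Ψc ^ 2 * hEE
  have hsinh_sq : Ψs ^ 2 = Ψc ^ 2 - 1 := by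
    have := Complex.cosh_sq_sub_sinh_sq ((ψ : ℂ) + I * φ)
    rw [← hΨc, ← hΨs] at this
    linear_combination -this
  have hquad : (Ψc * E1 - Ψs - I) * (Ψc * E1 - Ψs + I) = 0 := by
    have hI : (I : ℂ) ^ 2 = -1 := Complex.I_sq
    linear_combination (Ψc * E1) * hsum - hprod + hsinh_sq - hI
  -- final contradiction in both cases
  have final : ∀ p q : ℝ,
      ‖Ψc‖ * Real.exp (v - v') = p →
      ‖Ψc‖ * Real.exp (v' - v) = q →
      p + q = 2 * Real.cosh ψ →
      (p - q = 2 * Real.sin φ ∨ q - p = 2 * Real.sin φ) → False := by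
    intro p q hp hq hpq hd
    have hneg : Real.exp (-(v' - v)) = Real.exp (v - v') := by congr 1; ring
    have hch : ‖Ψc‖ * Real.cosh (v' - v) = Real.cosh ψ := by
      rw [Real.cosh_eq, hneg]; linear_combination (hp + hq + hpq) / 2
    have hsh : ‖Ψc‖ * Real.sinh (v' - v) = (q - p) / 2 := by
      rw [Real.sinh_eq, hneg]; linear_combination (hq - hp) / 2
    have e0 : Real.cosh ψ * Real.sinh (v' - v) = (q - p) / 2 * Real.cosh (v' - v) := by
      calc Real.cosh ψ * Real.sinh (v' - v)
          = (‖Ψc‖ * Real.cosh (v' - v)) * Real.sinh (v' - v) := by rw [hch]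
        _ = (‖Ψc‖ * Real.sinh (v' - v)) * Real.cosh (v' - v) := by ring
        _ = (q - p) / 2 * Real.cosh (v' - v) := by rw [hsh]
    rcases hd with hd | hd
    · nlinarith [mul_pos hcb (sub_pos.2 hSK)]
    · nlinarith [mul_pos hcb (sub_pos.2 hSK)]
  rcases mul_eq_zero.1 hquad with hc | hc
  · have hs1 : Ψc * E1 = Ψs + I := by linear_combination hc
    have hs2 : Ψc * E2 = Ψs - I := by linear_combination hsum - hs1
    have hp : ‖Ψc‖ * Real.exp (v - v') = Real.cosh ψ + Real.sin φ := by
      rw [← habsP, ← hs1, norm_mul, habsE1]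
    have hq : ‖Ψc‖ * Real.exp (v' - v) = Real.cosh ψ - Real.sin φ := by
      rw [← habsM, ← hs2, norm_mul, habsE2]
    exact final _ _ hp hq (by ring) (Or.inl (by ring))
  · have hs1 : Ψc * E1 = Ψs - I := by linear_combination hc
    have hs2 : Ψc * E2 = Ψs + I := by linear_combination hsum - hs1
    have hp : ‖Ψc‖ * Real.exp (v - v') = Real.cosh ψ - Real.sin φ := by
      rw [← habsM, ← hs1, norm_mul, habsE1]
    have hq : ‖Ψc‖ * Real.exp (v' - v) = Real.cosh ψ + Real.sin φ := by
      rw [← habsP, ← hs2, norm_mul, habsE2]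
    exact final _ _ hp hq (by ring) (Or.inr (by ring))
end
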